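/- For nonzero X, Y ∈ ℝ^{M×N} with K_X = X Xᵀ, K_Y = Y Yᵀ, the normalized Bures similarity ℱ(K_X, K_Y)/√(Tr[K_X] Tr[K_Y]) equals the maximum over orthogonal Q ∈ O(N) of Tr[Xᵀ Y Q]/√(Tr[Xᵀ X] Tr[Yᵀ Y]) (the cosine of the Riemannian shape distance). -/

import Mathlib

open Matrix

lemma real_conjTranspose_eq {m n : ℕ} (A : Matrix (Fin m) (Fin n) ℝ) : Aᴴ = Aᵀ := rfl

lemma psd_tmul {m n : ℕ} (A : Matrix (Fin m) (Fin n) ℝ) : (Aᵀ * A).PosSemidef := by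
  have h := Matrix.posSemidef_conjTranspose_mul_self A
  rwa [real_conjTranspose_eq] at h

lemma psd_gram {m n : ℕ} (A : Matrix (Fin m) (Fin n) ℝ) : (A * Aᵀ).PosSemidef := by
  have h := Matrix.posSemidef_self_mul_conjTranspose A
  rwa [real_conjTranspose_eq] at h

namespace Matrix.PosSemidef

open scoped ComplexOrder

/-- The square root of a positive semidefinite matrix (definition removed from Mathlib;
restored here verbatim from the older Mathlib). -/
noncomputable def sqrt {n 𝕜 : Type*} [Fintype n] [RCLike 𝕜] [DecidableEq n] {A : Matrix n n 𝕜}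
    (hA : PosSemidef A) : Matrix n n 𝕜 :=
  hA.1.eigenvectorUnitary.1 * diagonal ((↑) ∘ (√·) ∘ hA.1.eigenvalues) *
    (star hA.1.eigenvectorUnitary : Matrix n n 𝕜)

lemma posSemidef_sqrt {n 𝕜 : Type*} [Fintype n] [RCLike 𝕜] [DecidableEq n] {A : Matrix n n 𝕜}
    (hA : PosSemidef A) : PosSemidef hA.sqrt := by
  have hd : PosSemidef (diagonal ((↑) ∘ (√·) ∘ hA.1.eigenvalues : n → 𝕜)) :=
    posSemidef_diagonal_iff.mpr fun i => by
      simp only [Function.comp_apply]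
      exact_mod_cast Real.sqrt_nonneg _
  have h := hd.mul_mul_conjTranspose_same (hA.1.eigenvectorUnitary : Matrix n n 𝕜)
  unfold sqrt
  simpa [Matrix.star_eq_conjTranspose] using h

end Matrix.PosSemidef

lemma psd_sand {M : ℕ} {Kx Ky : Matrix (Fin M) (Fin M) ℝ} (hx : Kx.PosSemidef) (hy : Ky.PosSemidef) :
    (hx.sqrt * Ky * hx.sqrt).PosSemidef := by
  have h := hy.mul_mul_conjTranspose_same hx.sqrt
  rwa [hx.posSemidef_sqrt.isHermitian.eq] at h

/-- Nuclear norm: sum of singular values, i.e. `Tr[(AᵀA)^{1/2}]`. -/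
noncomputable def nuclearNorm {m n : ℕ} (A : Matrix (Fin m) (Fin n) ℝ) : ℝ :=
  (Matrix.PosSemidef.sqrt (psd_tmul A)).trace

/-- Frobenius norm. -/
noncomputable def frobNorm {m n : ℕ} (A : Matrix (Fin m) (Fin n) ℝ) : ℝ :=
  Real.sqrt (Matrix.trace (Aᵀ * A))

/-- Fidelity `Tr[(Kx^{1/2} Ky Kx^{1/2})^{1/2}]` between PSD matrices. -/
noncomputable def fidelity {M : ℕ} {Kx Ky : Matrix (Fin M) (Fin M) ℝ}
    (hx : Kx.PosSemidef) (hy : Ky.PosSemidef) : ℝ :=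
  (Matrix.PosSemidef.sqrt (psd_sand hx hy)).trace

open scoped MatrixOrder in
lemma Matrix.PosSemidef.sqrt_eq_cfcsqrt' {n : ℕ} {A : Matrix (Fin n) (Fin n) ℝ} (hA : A.PosSemidef) :
    hA.sqrt = CFC.sqrt A := by
  rw [CFC.sqrt_eq_real_sqrt A hA.nonneg, cfcₙ_eq_cfc, hA.1.cfc_eq]
  rfl

open scoped MatrixOrder in
lemma Matrix.PosSemidef.sqrt_mul_self {n : ℕ} {A : Matrix (Fin n) (Fin n) ℝ} (hA : A.PosSemidef) :
    hA.sqrt * hA.sqrt = A := by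
  rw [hA.sqrt_eq_cfcsqrt']
  exact CFC.sqrt_mul_sqrt_self A hA.nonneg

open scoped MatrixOrder in
lemma Matrix.PosSemidef.eq_sqrt_of_sq_eq {n : ℕ} {A B : Matrix (Fin n) (Fin n) ℝ} (hB : B.PosSemidef)
    (hA : A.PosSemidef) (h : B ^ 2 = A) : B = hA.sqrt := by
  rw [hA.sqrt_eq_cfcsqrt']
  exact (CFC.sqrt_unique (by rw [← h, pow_two]) hB.nonneg).symm

lemma trace_sqrt_congr' {n : ℕ} {A B : Matrix (Fin n) (Fin n) ℝ} (h : A = B)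
    (hA : A.PosSemidef) (hB : B.PosSemidef) : hA.sqrt.trace = hB.sqrt.trace := by
  subst h; rfl

lemma psd_gram' {m n : ℕ} (A : Matrix (Fin m) (Fin n) ℝ) : (A * Aᵀ).PosSemidef := by
  have h := Matrix.posSemidef_self_mul_conjTranspose A
  rwa [show Aᴴ = Aᵀ from rfl] at h

lemma col_eq_zero_of_diag_zero' {m n : ℕ} {C : Matrix (Fin m) (Fin n) ℝ} {d : Fin n → ℝ}
    (h : Cᵀ * C = Matrix.diagonal d) {i : Fin n} (hi : d i = 0) (j : Fin m) : C j i = 0 := by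
  have h1 : (Cᵀ * C) i i = d i := by rw [h, Matrix.diagonal_apply_eq]
  have h2 : ∑ j, C j i ^ 2 = 0 := by
    rw [← hi, ← h1]
    simp [Matrix.mul_apply, Matrix.transpose_apply, sq]
  have h3 := (Finset.sum_eq_zero_iff_of_nonneg (fun j _ => sq_nonneg (C j i))).mp h2 j
    (Finset.mem_univ j)
  exact pow_eq_zero_iff (two_ne_zero) |>.mp h3

lemma trace_sqrt_gram_eq' {m n : ℕ} (C : Matrix (Fin m) (Fin n) ℝ) (d : Fin n → ℝ)
    (hd : ∀ i, 0 ≤ d i) (h : Cᵀ * C = Matrix.diagonal d) :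
    (psd_gram' C).sqrt.trace = ∑ i, Real.sqrt (d i) := by
  classical
  set g : Fin n → ℝ := fun i => if 0 < d i then (Real.sqrt (d i))⁻¹ else 0 with hg
  have hgnn : ∀ i, 0 ≤ g i := fun i => by
    by_cases hdi : 0 < d i <;> simp [hg, hdi, Real.sqrt_nonneg]
  have hdiag : Matrix.diagonal (fun i => Real.sqrt (g i)) * Matrix.diagonal (fun i => Real.sqrt (g i))
      = Matrix.diagonal g := by
    rw [Matrix.diagonal_mul_diagonal]
    exact congrArg _ (funext fun i => Real.mul_self_sqrt (hgnn i))
  have hBpsd : (C * Matrix.diagonal g * Cᵀ).PosSemidef := by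
    have heq : C * Matrix.diagonal g * Cᵀ
        = (C * Matrix.diagonal (fun i => Real.sqrt (g i))) *
          (C * Matrix.diagonal (fun i => Real.sqrt (g i)))ᵀ := by
      rw [Matrix.transpose_mul, Matrix.diagonal_transpose]
      simp only [Matrix.mul_assoc]
      congr 1
      rw [← Matrix.mul_assoc, hdiag]
    rw [heq]; exact psd_gram' _
  have hsq : (C * Matrix.diagonal g * Cᵀ) ^ 2 = C * Cᵀ := by
    rw [pow_two]
    simp only [Matrix.mul_assoc]
    rw [← Matrix.mul_assoc Cᵀ C, h, ← Matrix.mul_assoc (Matrix.diagonal d),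
      Matrix.diagonal_mul_diagonal, ← Matrix.mul_assoc (Matrix.diagonal g),
      Matrix.diagonal_mul_diagonal, ← Matrix.mul_assoc]
    ext j k
    rw [Matrix.mul_apply, Matrix.mul_apply]
    apply Finset.sum_congr rfl
    intro i _
    rw [Matrix.mul_diagonal]
    by_cases hdi : 0 < d i
    · have hs : Real.sqrt (d i) ≠ 0 := ne_of_gt (Real.sqrt_pos.mpr hdi)
      have hds : d i = Real.sqrt (d i) * Real.sqrt (d i) := (Real.mul_self_sqrt (hd i)).symm
      simp only [hg, hdi, if_true]
      rw [hds]
      field_simp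
      rw [Real.sqrt_sq (Real.sqrt_nonneg _)]
    · have hdi0 : d i = 0 := le_antisymm (not_lt.mp hdi) (hd i)
      have := col_eq_zero_of_diag_zero' h hdi0 j
      simp [this]
  have hkey : C * Matrix.diagonal g * Cᵀ = (psd_gram' C).sqrt :=
    hBpsd.eq_sqrt_of_sq_eq (psd_gram' C) hsq
  rw [← hkey]
  rw [Matrix.trace_mul_cycle, h, Matrix.diagonal_mul_diagonal, Matrix.trace_diagonal]
  apply Finset.sum_congr rfl
  intro i _
  by_cases hdi : 0 < d i
  · have hs : Real.sqrt (d i) ≠ 0 := ne_of_gt (Real.sqrt_pos.mpr hdi)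
    have hds : d i = Real.sqrt (d i) * Real.sqrt (d i) := (Real.mul_self_sqrt (hd i)).symm
    simp only [hg, hdi, if_true]
    rw [hds]
    field_simp
    rw [Real.sqrt_sq (Real.sqrt_nonneg _)]
  · have hdi0 : d i = 0 := le_antisymm (not_lt.mp hdi) (hd i)
    simp [hdi0]

lemma trace_mul_le' {n : ℕ} (C R : Matrix (Fin n) (Fin n) ℝ) (d : Fin n → ℝ)
    (hd : ∀ i, 0 ≤ d i) (h : Cᵀ * C = Matrix.diagonal d) (hR : Rᵀ * R = 1) :
    Matrix.trace (C * R) ≤ ∑ i, Real.sqrt (d i) := by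
  have hRR : R * Rᵀ = 1 := mul_eq_one_comm.mp hR
  have htr : Matrix.trace (C * R) = ∑ j, ∑ i, C i j * R j i := by
    rw [Matrix.trace]
    simp only [Matrix.diag_apply, Matrix.mul_apply]
    rw [Finset.sum_comm]
  rw [htr]
  apply Finset.sum_le_sum
  intro j _
  have h1 : ∑ i, C i j ^ 2 = d j := by
    have h' : (Cᵀ * C) j j = d j := by rw [h, Matrix.diagonal_apply_eq]
    simpa [Matrix.mul_apply, Matrix.transpose_apply, sq] using h'
  have h2 : ∑ i, R j i ^ 2 = 1 := by
    have h' : (R * Rᵀ) j j = (1 : Matrix (Fin n) (Fin n) ℝ) j j := by rw [hRR]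
    simpa [Matrix.mul_apply, Matrix.transpose_apply, sq, Matrix.one_apply] using h'
  have h3 := Finset.sum_mul_sq_le_sq_mul_sq Finset.univ (fun i => C i j) (fun i => R j i)
  calc ∑ i, C i j * R j i ≤ |∑ i, C i j * R j i| := le_abs_self _
    _ = Real.sqrt ((∑ i, C i j * R j i) ^ 2) := (Real.sqrt_sq_eq_abs _).symm
    _ ≤ Real.sqrt ((∑ i, C i j ^ 2) * ∑ i, R j i ^ 2) := Real.sqrt_le_sqrt h3
    _ = Real.sqrt (d j) := by rw [h1, h2, mul_one]

lemma exists_max' {n : ℕ} (C : Matrix (Fin n) (Fin n) ℝ) (d : Fin n → ℝ)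
    (hd : ∀ i, 0 ≤ d i) (h : Cᵀ * C = Matrix.diagonal d) :
    ∃ R : Matrix (Fin n) (Fin n) ℝ, Rᵀ * R = 1 ∧
      Matrix.trace (C * R) = ∑ i, Real.sqrt (d i) := by
  classical
  set v : Fin n → EuclideanSpace ℝ (Fin n) :=
    fun i => WithLp.toLp 2 (fun j => C j i * (Real.sqrt (d i))⁻¹) with hv
  have hCC : ∀ i k, ∑ j, C j i * C j k = if i = k then d i else 0 := by
    intro i k
    have h' : (Cᵀ * C) i k = Matrix.diagonal d i k := by rw [h]
    simpa [Matrix.mul_apply, Matrix.transpose_apply, Matrix.diagonal_apply] using h'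
  have hortho : Orthonormal ℝ (Set.restrict {i | 0 < d i} v) := by
    rw [orthonormal_iff_ite]
    rintro ⟨i, hi⟩ ⟨k, hk⟩
    show inner ℝ (v i) (v k) = _
    rw [real_inner_comm, PiLp.inner_apply]
    simp only [RCLike.inner_apply, conj_trivial]
    have hterm : ∀ j, v i j * v k j = (C j i * C j k) * ((Real.sqrt (d i))⁻¹ * (Real.sqrt (d k))⁻¹) := by
      intro j; simp only [hv]; ring
    rw [Finset.sum_congr rfl (fun j _ => hterm j), ← Finset.sum_mul, hCC]
    by_cases hik : i = k
    · subst hik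
      have hi' : 0 < d i := hi
      have hs : Real.sqrt (d i) ≠ 0 := ne_of_gt (Real.sqrt_pos.mpr hi')
      have hds : d i = Real.sqrt (d i) * Real.sqrt (d i) := (Real.mul_self_sqrt (hd i)).symm
      simp only [if_pos rfl]
      rw [hds]
      field_simp
      rw [Real.sqrt_sq (Real.sqrt_nonneg _)]
      simp
    · rw [if_neg hik, if_neg (by simpa [Subtype.mk_eq_mk] using hik), zero_mul]
  obtain ⟨b, hb⟩ := hortho.exists_orthonormalBasis_extension_of_card_eq (by simp)
  set R : Matrix (Fin n) (Fin n) ℝ := Matrix.of (fun i j => b i j) with hRdef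
  have hRR : R * Rᵀ = 1 := by
    ext i k
    have hbik := orthonormal_iff_ite.mp b.orthonormal i k
    rw [real_inner_comm, PiLp.inner_apply] at hbik
    simp only [RCLike.inner_apply, conj_trivial] at hbik
    rw [Matrix.mul_apply, Matrix.one_apply]
    simpa [hRdef, Matrix.transpose_apply] using hbik
  have hR : Rᵀ * R = 1 := mul_eq_one_comm.mp hRR
  refine ⟨R, hR, ?_⟩
  have htr : Matrix.trace (C * R) = ∑ j, ∑ i, C i j * R j i := by
    rw [Matrix.trace]
    simp only [Matrix.diag_apply, Matrix.mul_apply]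
    rw [Finset.sum_comm]
  rw [htr]
  apply Finset.sum_congr rfl
  intro j _
  by_cases hdj : 0 < d j
  · have hbj : b j = v j := hb j hdj
    have hRj : ∀ i, R j i = C i j * (Real.sqrt (d j))⁻¹ := by
      intro i
      show b j i = _
      rw [hbj]
    have hsum : ∑ i, C i j * R j i = (∑ i, C i j * C i j) * (Real.sqrt (d j))⁻¹ := by
      rw [Finset.sum_mul]
      exact Finset.sum_congr rfl fun i _ => by rw [hRj i]; ring
    rw [hsum, hCC j j, if_pos rfl]
    have hs : Real.sqrt (d j) ≠ 0 := ne_of_gt (Real.sqrt_pos.mpr hdj)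
    have hds : d j = Real.sqrt (d j) * Real.sqrt (d j) := (Real.mul_self_sqrt (hd j)).symm
    rw [hds]
    field_simp
    rw [Real.sqrt_sq (Real.sqrt_nonneg _)]
  · have hdj0 : d j = 0 := le_antisymm (not_lt.mp hdj) (hd j)
    have hz : ∀ i, C i j = 0 := col_eq_zero_of_diag_zero' h hdj0
    simp [hz, hdj0]

theorem nbs_eq_cos_riemannian_shape_distance (M N : ℕ) (X Y : Matrix (Fin M) (Fin N) ℝ)
    (hX : Matrix.trace (X * Xᵀ) > 0) (hY : Matrix.trace (Y * Yᵀ) > 0) :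
    IsGreatest
      {t : ℝ | ∃ Q : Matrix (Fin N) (Fin N) ℝ, Qᵀ * Q = 1 ∧
        t = Matrix.trace (Xᵀ * Y * Q) /
          Real.sqrt (Matrix.trace (Xᵀ * X) * Matrix.trace (Yᵀ * Y))}
      (fidelity (psd_gram X) (psd_gram Y) /
        Real.sqrt (Matrix.trace (X * Xᵀ) * Matrix.trace (Y * Yᵀ))) := by
  classical
  set A : Matrix (Fin N) (Fin N) ℝ := Xᵀ * Y with hAdef
  have hH : (Aᵀ * A).PosSemidef := psd_tmul A
  have hHerm : (Aᵀ * A).IsHermitian := hH.1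
  set V : Matrix (Fin N) (Fin N) ℝ := (hHerm.eigenvectorUnitary : Matrix (Fin N) (Fin N) ℝ)
    with hVdef
  set d : Fin N → ℝ := hHerm.eigenvalues with hddef
  have hdnn : ∀ i, 0 ≤ d i := fun i => hH.eigenvalues_nonneg i
  have hVV : Vᵀ * V = 1 := Matrix.mem_unitaryGroup_iff'.mp (hHerm.eigenvectorUnitary).2
  have hVVt : V * Vᵀ = 1 := mul_eq_one_comm.mp hVV
  have hspec : Aᵀ * A = V * Matrix.diagonal d * Vᵀ := by
    have hsp := hHerm.spectral_theorem
    have hco : (RCLike.ofReal ∘ hHerm.eigenvalues : Fin N → ℝ) = d := by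
      funext i; simp [hddef]
    rw [hco] at hsp
    exact hsp
  have key : ∀ {m : ℕ} (P : Matrix (Fin m) (Fin N) ℝ), Pᵀ * P = Aᵀ * A →
      (P * V)ᵀ * (P * V) = Matrix.diagonal d := by
    intro m P hP
    rw [Matrix.transpose_mul]
    calc Vᵀ * Pᵀ * (P * V) = Vᵀ * (Pᵀ * P) * V := by simp only [Matrix.mul_assoc]
      _ = Vᵀ * (V * Matrix.diagonal d * Vᵀ) * V := by rw [hP, hspec]
      _ = (Vᵀ * V) * Matrix.diagonal d * (Vᵀ * V) := by simp only [Matrix.mul_assoc]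
      _ = Matrix.diagonal d := by rw [hVV, one_mul, mul_one]
  have hCA : (A * V)ᵀ * (A * V) = Matrix.diagonal d := key A rfl
  set Sx : Matrix (Fin M) (Fin M) ℝ := (psd_gram X).sqrt with hSxdef
  have hSxT : Sxᵀ = Sx := (psd_gram X).posSemidef_sqrt.isHermitian.eq
  have hSx2 : Sx * Sx = X * Xᵀ := (psd_gram X).sqrt_mul_self
  set B : Matrix (Fin M) (Fin N) ℝ := Sx * Y with hBdef
  have hBtB : Bᵀ * B = Aᵀ * A := by
    rw [hBdef, hAdef, Matrix.transpose_mul, Matrix.transpose_mul, Matrix.transpose_transpose,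
      hSxT]
    calc Yᵀ * Sx * (Sx * Y) = Yᵀ * (Sx * Sx) * Y := by simp only [Matrix.mul_assoc]
      _ = Yᵀ * (X * Xᵀ) * Y := by rw [hSx2]
      _ = Yᵀ * X * (Xᵀ * Y) := by simp only [Matrix.mul_assoc]
  have hCB : (B * V)ᵀ * (B * V) = Matrix.diagonal d := key B hBtB
  have hmat : Sx * (Y * Yᵀ) * Sx = (B * V) * (B * V)ᵀ := by
    symm
    calc (B * V) * (B * V)ᵀ = B * (V * Vᵀ) * Bᵀ := by
          rw [Matrix.transpose_mul]; simp only [Matrix.mul_assoc]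
      _ = B * Bᵀ := by rw [hVVt, Matrix.mul_one]
      _ = Sx * (Y * Yᵀ) * Sx := by
          rw [hBdef, Matrix.transpose_mul, hSxT]; simp only [Matrix.mul_assoc]
  have hfid : fidelity (psd_gram X) (psd_gram Y) = ∑ i, Real.sqrt (d i) := by
    show ((psd_sand (psd_gram X) (psd_gram Y)).sqrt).trace = _
    rw [trace_sqrt_congr' hmat (psd_sand (psd_gram X) (psd_gram Y)) (psd_gram (B * V))]
    exact trace_sqrt_gram_eq' (B * V) d hdnn hCB
  have hden : Real.sqrt (Matrix.trace (Xᵀ * X) * Matrix.trace (Yᵀ * Y))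
      = Real.sqrt (Matrix.trace (X * Xᵀ) * Matrix.trace (Y * Yᵀ)) := by
    rw [Matrix.trace_mul_comm Xᵀ X, Matrix.trace_mul_comm Yᵀ Y]
  constructor
  · obtain ⟨R, hR, hRt⟩ := exists_max' (A * V) d hdnn hCA
    refine ⟨V * R, ?_, ?_⟩
    · rw [Matrix.transpose_mul]
      calc Rᵀ * Vᵀ * (V * R) = Rᵀ * (Vᵀ * V) * R := by simp only [Matrix.mul_assoc]
        _ = 1 := by rw [hVV, Matrix.mul_one, hR]
    · rw [hden, hfid]
      congr 1
      rw [← hRt, Matrix.mul_assoc A V R]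
  · rintro t ⟨Q, hQ, rfl⟩
    rw [hden]
    have hb : Matrix.trace (A * Q) ≤ fidelity (psd_gram X) (psd_gram Y) := by
      rw [hfid]
      have hRorth : (Vᵀ * Q)ᵀ * (Vᵀ * Q) = 1 := by
        rw [Matrix.transpose_mul, Matrix.transpose_transpose]
        calc Qᵀ * V * (Vᵀ * Q) = Qᵀ * (V * Vᵀ) * Q := by simp only [Matrix.mul_assoc]
          _ = 1 := by rw [hVVt, Matrix.mul_one, hQ]
      have hle := trace_mul_le' (A * V) (Vᵀ * Q) d hdnn hCA hRorth
      calc Matrix.trace (A * Q) = Matrix.trace ((A * V) * (Vᵀ * Q)) := by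
            rw [Matrix.mul_assoc A V (Vᵀ * Q), ← Matrix.mul_assoc V Vᵀ Q, hVVt, Matrix.one_mul]
        _ ≤ _ := hle
    gcongr
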